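/- There exists a constant c > 0 such that for every integer m ≥ 2 and every set F of goal vertices of the dependency grid D(m,2m) with |F| = ⌊m²/3⌋, the neighborhood of F satisfies |N(F)| ≥ |F| + c·m, where N(F) denotes the set of start vertices adjacent to some goal vertex in F. -/

import Mathlib

open scoped Classical

/-- Two grid vertices (coordinates in `ℕ × ℕ`) are adjacent iff their `L¹` distance is `1`. -/
def gridAdj (a b : ℕ × ℕ) : Prop := Nat.dist a.1 b.1 + Nat.dist a.2 b.2 = 1

/-- The vertex set of the dependency grid `D(m, 2m)`, with `0`-based coordinates. -/
def gridVerts (m : ℕ) : Finset (ℕ × ℕ) := (Finset.range m) ×ˢ (Finset.range (2 * m))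

/-- The start vertices of `D(m, 2m)`: those whose coordinate sum is even. -/
def gridStarts (m : ℕ) : Finset (ℕ × ℕ) := (gridVerts m).filter (fun v => Even (v.1 + v.2))

/-- The goal vertices of `D(m, 2m)`: those whose coordinate sum is odd. -/
def gridGoals (m : ℕ) : Finset (ℕ × ℕ) := (gridVerts m).filter (fun v => Odd (v.1 + v.2))

/-- `gridN m g` is the set of start vertices of `D(m, 2m)` adjacent to some vertex of `g`. -/
noncomputable def gridN (m : ℕ) (g : Finset (ℕ × ℕ)) : Finset (ℕ × ℕ) :=
  (gridStarts m).filter (fun s => ∃ t ∈ g, gridAdj s t)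


lemma card_even_range (m : ℕ) :
    ((Finset.range m).filter (fun x => x % 2 = 0)).card = (m + 1) / 2 := by
  induction m with
  | zero => simp
  | succ n ih =>
    rw [Finset.range_add_one, Finset.filter_insert]
    by_cases h : n % 2 = 0
    · rw [if_pos h, Finset.card_insert_of_notMem (by simp)]
      omega
    · rw [if_neg h]; omega

lemma card_odd_range (m : ℕ) :
    ((Finset.range m).filter (fun x => x % 2 = 1)).card = m / 2 := by
  induction m with
  | zero => simp
  | succ n ih =>
    rw [Finset.range_add_one, Finset.filter_insert]
    by_cases h : n % 2 = 1
    · rw [if_pos h, Finset.card_insert_of_notMem (by simp)]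
      omega
    · rw [if_neg h]; omega

/-- If `S` is a nonempty proper subset of `range m` and `T` contains `S` together with
one-step horizontal neighbours, then `|T| ≥ |S| + 1`. -/
lemma gain_one {m : ℕ} {S T : Finset ℕ} (hS : S ⊆ Finset.range m) (hST : S ⊆ T)
    (hR : ∀ x ∈ S, x + 1 < m → x + 1 ∈ T) (hL : ∀ x ∈ S, 0 < x → x - 1 ∈ T)
    (hne : S.Nonempty) (hnf : S ≠ Finset.range m) : S.card + 1 ≤ T.card := by
  have hbound : ∃ x ∈ S, (x + 1 < m ∧ x + 1 ∉ S) ∨ (0 < x ∧ x - 1 ∉ S) := by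
    by_contra hcon
    push_neg at hcon
    obtain ⟨a, ha⟩ := hne
    have hdown : ∀ t, a - t ∈ S := by
      intro t
      induction t with
      | zero => simpa using ha
      | succ n ih =>
        rcases Nat.eq_zero_or_pos (a - n) with h0 | h0
        · have : a - (n + 1) = a - n := by omega
          rw [this]; exact ih
        · have := (hcon _ ih).2 h0
          have heq : a - (n + 1) = a - n - 1 := by omega
          rw [heq]; exact this
    have h0 : (0 : ℕ) ∈ S := by have := hdown a; simpa using this
    have hup : ∀ y, y < m → y ∈ S := by
      intro y
      induction y with
      | zero => intro _; exact h0
      | succ n ih =>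
        intro hy
        have hn : n ∈ S := ih (by omega)
        exact (hcon n hn).1 hy
    apply hnf
    apply Finset.Subset.antisymm hS
    intro y hy
    exact hup y (Finset.mem_range.mp hy)
  obtain ⟨x, hx, hcase⟩ := hbound
  have hss : S ⊂ T := by
    constructor
    · exact hST
    · intro hTS
      rcases hcase with ⟨h1, h2⟩ | ⟨h1, h2⟩
      · exact h2 (hTS (hR x hx h1))
      · exact h2 (hTS (hL x hx h1))
  exact Finset.card_lt_card hss

lemma step_card {A B T C : Finset ℕ} (hA : A ⊆ T) (hB : B ⊆ T) (hAB : A ∩ B ⊆ C) :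
    A.card + B.card ≤ C.card + T.card := by
  have h1 : (A ∪ B).card ≤ T.card := Finset.card_le_card (Finset.union_subset hA hB)
  have h2 : (A \ B).card + B.card = (A ∪ B).card := Finset.card_sdiff_add_card A B
  have h3 : (A ∩ B).card + (A \ B).card = A.card := Finset.card_inter_add_card_sdiff A B
  have h4 : (A ∩ B).card ≤ C.card := Finset.card_le_card hAB
  omega

lemma total_from_interval {m : ℕ} {s t : ℕ → ℕ} {a b g : ℕ}
    (hab : a ≤ b) (hbm : b ≤ m)
    (hle : ∀ k, k < m → s k ≤ t k)
    (hint : g + ∑ k ∈ Finset.Ico a b, s k ≤ ∑ k ∈ Finset.Ico a b, t k) :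
    g + ∑ k ∈ Finset.range m, s k ≤ ∑ k ∈ Finset.range m, t k := by
  have hsub : Finset.Ico a b ⊆ Finset.range m := by
    intro x hx
    simp only [Finset.mem_Ico, Finset.mem_range] at *
    omega
  have hs : ∑ k ∈ Finset.range m \ Finset.Ico a b, s k + ∑ k ∈ Finset.Ico a b, s k
      = ∑ k ∈ Finset.range m, s k := Finset.sum_sdiff hsub
  have ht : ∑ k ∈ Finset.range m \ Finset.Ico a b, t k + ∑ k ∈ Finset.Ico a b, t k
      = ∑ k ∈ Finset.range m, t k := Finset.sum_sdiff hsub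
  have hrest : ∑ k ∈ Finset.range m \ Finset.Ico a b, s k
      ≤ ∑ k ∈ Finset.range m \ Finset.Ico a b, t k := by
    apply Finset.sum_le_sum
    intro k hk
    have : k ∈ Finset.range m := (Finset.mem_sdiff.mp hk).1
    exact hle k (Finset.mem_range.mp this)
  omega

lemma mem_gridGoals_iff {m : ℕ} {v : ℕ × ℕ} :
    v ∈ gridGoals m ↔ v.1 < m ∧ v.2 < 2 * m ∧ (v.1 + v.2) % 2 = 1 := by
  simp [gridGoals, gridVerts, Finset.mem_filter, Finset.mem_product, Nat.odd_iff, and_assoc]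

lemma mem_gridStarts_iff {m : ℕ} {v : ℕ × ℕ} :
    v ∈ gridStarts m ↔ v.1 < m ∧ v.2 < 2 * m ∧ (v.1 + v.2) % 2 = 0 := by
  simp [gridStarts, gridVerts, Finset.mem_filter, Finset.mem_product, Nat.even_iff, and_assoc]

lemma gridAdj_iff {a b : ℕ × ℕ} :
    gridAdj a b ↔ (a.1 - b.1) + (b.1 - a.1) + ((a.2 - b.2) + (b.2 - a.2)) = 1 := by
  simp [gridAdj, Nat.dist]

/-- column set of `F` within band `k` (rows `2k, 2k+1`). -/
def colS (F : Finset (ℕ × ℕ)) (k : ℕ) : Finset ℕ :=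
  (F.filter (fun v => v.2 / 2 = k)).image Prod.fst

/-- column set of the neighbourhood within band `k`. -/
noncomputable def colT (m : ℕ) (F : Finset (ℕ × ℕ)) (k : ℕ) : Finset ℕ :=
  ((gridN m F).filter (fun v => v.2 / 2 = k)).image Prod.fst

lemma exists_of_mem_colS {m : ℕ} {F : Finset (ℕ × ℕ)} (hF : F ⊆ gridGoals m) {k x : ℕ}
    (hx : x ∈ colS F k) :
    ∃ y, (x, y) ∈ F ∧ y / 2 = k ∧ x < m ∧ y < 2 * m ∧ (x + y) % 2 = 1 := by
  obtain ⟨v, hv, hvx⟩ := Finset.mem_image.mp hx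
  obtain ⟨hvF, hvk⟩ := Finset.mem_filter.mp hv
  have hg := mem_gridGoals_iff.mp (hF hvF)
  subst hvx
  exact ⟨v.2, by simpa using hvF, hvk, hg.1, hg.2.1, hg.2.2⟩

lemma mem_colT_of {m : ℕ} {F : Finset (ℕ × ℕ)} {x0 y0 k : ℕ}
    (hx : x0 < m) (hy : y0 < 2 * m) (hpar : (x0 + y0) % 2 = 0)
    (hadj : ∃ t ∈ F, gridAdj (x0, y0) t) (hk : y0 / 2 = k) : x0 ∈ colT m F k := by
  apply Finset.mem_image.mpr
  refine ⟨(x0, y0), Finset.mem_filter.mpr ⟨?_, hk⟩, rfl⟩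
  apply Finset.mem_filter.mpr
  exact ⟨mem_gridStarts_iff.mpr ⟨hx, hy, hpar⟩, hadj⟩

lemma card_colS {m : ℕ} {F : Finset (ℕ × ℕ)} (hF : F ⊆ gridGoals m) (k : ℕ) :
    (colS F k).card = (F.filter (fun v => v.2 / 2 = k)).card := by
  apply Finset.card_image_of_injOn
  intro v hv w hw hvw
  obtain ⟨hvF, hvk⟩ := Finset.mem_filter.mp hv
  obtain ⟨hwF, hwk⟩ := Finset.mem_filter.mp hw
  have h1 := mem_gridGoals_iff.mp (hF hvF)
  have h2 := mem_gridGoals_iff.mp (hF hwF)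
  have : v.2 = w.2 := by omega
  exact Prod.ext hvw this

lemma card_colT {m : ℕ} (F : Finset (ℕ × ℕ)) (k : ℕ) :
    (colT m F k).card = ((gridN m F).filter (fun v => v.2 / 2 = k)).card := by
  apply Finset.card_image_of_injOn
  intro v hv w hw hvw
  obtain ⟨hvF, hvk⟩ := Finset.mem_filter.mp hv
  obtain ⟨hwF, hwk⟩ := Finset.mem_filter.mp hw
  have h1 := mem_gridStarts_iff.mp (Finset.mem_filter.mp hvF).1
  have h2 := mem_gridStarts_iff.mp (Finset.mem_filter.mp hwF).1
  have : v.2 = w.2 := by omega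
  exact Prod.ext hvw this

lemma card_F_eq {m : ℕ} {F : Finset (ℕ × ℕ)} (hF : F ⊆ gridGoals m) :
    F.card = ∑ k ∈ Finset.range m, (colS F k).card := by
  rw [Finset.card_eq_sum_card_fiberwise (f := fun v => v.2 / 2) (t := Finset.range m) ?_]
  · exact Finset.sum_congr rfl (fun k _ => (card_colS hF k).symm)
  · intro v hv
    have := mem_gridGoals_iff.mp (hF hv)
    simp only [Finset.mem_range]
    simpa [Finset.mem_range] using (by omega : v.2 / 2 < m)

lemma card_N_eq {m : ℕ} (F : Finset (ℕ × ℕ)) :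
    (gridN m F).card = ∑ k ∈ Finset.range m, (colT m F k).card := by
  rw [Finset.card_eq_sum_card_fiberwise (f := fun v => v.2 / 2) (t := Finset.range m) ?_]
  · exact Finset.sum_congr rfl (fun k _ => (card_colT F k).symm)
  · intro v hv
    have := mem_gridStarts_iff.mp (Finset.mem_filter.mp hv).1
    simp only [Finset.mem_range]
    simpa [Finset.mem_range] using (by omega : v.2 / 2 < m)

lemma key (m : ℕ) (hm : 2 ≤ m) (S T : ℕ → Finset ℕ)
    (hSsub : ∀ k, k < m → S k ⊆ Finset.range m)
    (hST : ∀ k, k < m → S k ⊆ T k)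
    (hR : ∀ k, k < m → ∀ x ∈ S k, x + 1 < m → x + 1 ∈ T k)
    (hL : ∀ k, k < m → ∀ x ∈ S k, 0 < x → x - 1 ∈ T k)
    (hU : ∀ k, k + 1 < m → ∀ x ∈ S k, x % 2 = 0 → x ∈ T (k + 1))
    (hD : ∀ k, k < m → 0 < k → ∀ x ∈ S k, x % 2 = 1 → x ∈ T (k - 1))
    (hq : ∑ k ∈ Finset.range m, (S k).card = m * m / 3) :
    4 * ∑ k ∈ Finset.range m, (S k).card + m ≤ 4 * ∑ k ∈ Finset.range m, (T k).card := by
  have hle : ∀ k, k < m → (S k).card ≤ (T k).card :=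
    fun k hk => Finset.card_le_card (hST k hk)
  by_cases hFull : ∃ i, i < m ∧ S i = Finset.range m
  · by_cases hEmp : ∃ j, j < m ∧ S j = ∅
    · obtain ⟨i, hi, hiF⟩ := hFull
      obtain ⟨j, hj, hjE⟩ := hEmp
      rcases lt_trichotomy i j with hij | hij | hij
      · -- full band below empty band: telescope the even counts upward
        set u : ℕ → ℕ := fun k => ((S k).filter (fun x => x % 2 = 0)).card with hu
        have claim : ∀ jj, i ≤ jj → jj < m →
            u i + ∑ k ∈ Finset.Ico (i+1) (jj+1), (S k).card
              ≤ u jj + ∑ k ∈ Finset.Ico (i+1) (jj+1), (T k).card := by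
          intro jj hijj
          induction jj, hijj using Nat.le_induction with
          | base => intro _; simp
          | succ jj hijj IH =>
            intro hjj1
            have hjjm : jj < m := by omega
            have IH' := IH hjjm
            have hstep : u jj + (S (jj+1)).card ≤ u (jj+1) + (T (jj+1)).card := by
              apply step_card (T := T (jj+1))
              · intro x hx
                have hx' := Finset.mem_filter.mp hx
                exact hU jj hjj1 x hx'.1 hx'.2
              · exact hST (jj+1) hjj1
              · intro x hx
                have hx' := Finset.mem_inter.mp hx
                exact Finset.mem_filter.mpr ⟨hx'.2, (Finset.mem_filter.mp hx'.1).2⟩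
            rw [Finset.sum_Ico_succ_top (by omega : i+1 ≤ jj+1),
                Finset.sum_Ico_succ_top (by omega : i+1 ≤ jj+1)]
            omega
        have hmain := claim j (by omega) hj
        have hui : u i = (m+1)/2 := by rw [hu]; simp only; rw [hiF, card_even_range]
        have huj : u j = 0 := by rw [hu]; simp only [hjE]; simp
        rw [hui, huj] at hmain
        have htot := total_from_interval (m := m) (a := i+1) (b := j+1) (g := (m+1)/2)
          (by omega) (by omega) hle (by omega)
        omega
      · exfalso
        have h0 : (0:ℕ) ∈ Finset.range m := Finset.mem_range.mpr (by omega)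
        rw [← hiF, hij, hjE] at h0
        simp at h0
      · -- empty band below full band: telescope the odd counts downward
        set o : ℕ → ℕ := fun k => ((S k).filter (fun x => x % 2 = 1)).card with ho
        have claim : ∀ ii, j ≤ ii → ii < m →
            o ii + ∑ k ∈ Finset.Ico j ii, (S k).card
              ≤ o j + ∑ k ∈ Finset.Ico j ii, (T k).card := by
          intro ii hjii
          induction ii, hjii using Nat.le_induction with
          | base => intro _; simp
          | succ ii hjii IH =>
            intro hii1
            have hiim : ii < m := by omega
            have IH' := IH hiim
            have hstep : o (ii+1) + (S ii).card ≤ o ii + (T ii).card := by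
              apply step_card (T := T ii)
              · intro x hx
                have hx' := Finset.mem_filter.mp hx
                have := hD (ii+1) hii1 (by omega) x hx'.1 hx'.2
                simpa using this
              · exact hST ii hiim
              · intro x hx
                have hx' := Finset.mem_inter.mp hx
                exact Finset.mem_filter.mpr ⟨hx'.2, (Finset.mem_filter.mp hx'.1).2⟩
            rw [Finset.sum_Ico_succ_top hjii, Finset.sum_Ico_succ_top hjii]
            omega
        have hmain := claim i (by omega) hi
        have hoi : o i = m/2 := by rw [ho]; simp only; rw [hiF, card_odd_range]
        have hoj : o j = 0 := by rw [ho]; simp only [hjE]; simp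
        rw [hoi, hoj] at hmain
        have htot := total_from_interval (m := m) (a := j) (b := i) (g := m/2)
          (by omega) (by omega) hle (by omega)
        omega
    · -- no empty band
      push_neg at hEmp
      set P := (Finset.range m).filter (fun k => S k ≠ Finset.range m) with hP
      have hgain : ∀ k ∈ Finset.range m,
          (S k).card + (if S k ≠ Finset.range m then 1 else 0) ≤ (T k).card := by
        intro k hk
        have hkm := Finset.mem_range.mp hk
        by_cases hfull : S k = Finset.range m
        · rw [if_neg (by simp [hfull])]
          have := hle k hkm
          omega
        · rw [if_pos hfull]
          have hne : (S k).Nonempty := hEmp k hkm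
          exact gain_one (hSsub k hkm) (hST k hkm) (hR k hkm) (hL k hkm) hne hfull
      have hsum2 : ∑ k ∈ Finset.range m, (S k).card + P.card
          ≤ ∑ k ∈ Finset.range m, (T k).card := by
        have h1 := Finset.sum_le_sum hgain
        rw [Finset.sum_add_distrib] at h1
        rwa [← Finset.card_filter] at h1
      have hPsub : P ⊆ Finset.range m := Finset.filter_subset _ _
      have hsplit : ∑ k ∈ Finset.range m \ P, (S k).card + ∑ k ∈ P, (S k).card
          = ∑ k ∈ Finset.range m, (S k).card := Finset.sum_sdiff hPsub
      have h1 : (Finset.range m \ P).card * m ≤ ∑ k ∈ Finset.range m \ P, (S k).card := by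
        have := Finset.card_nsmul_le_sum (Finset.range m \ P) (fun k => (S k).card) m ?_
        · simpa [smul_eq_mul] using this
        · intro k hk
          have hk' := Finset.mem_sdiff.mp hk
          have hfull : S k = Finset.range m := by
            by_contra hcon
            exact hk'.2 (Finset.mem_filter.mpr ⟨hk'.1, hcon⟩)
          show m ≤ (S k).card
          rw [hfull, Finset.card_range]
      have h2 : P.card ≤ ∑ k ∈ P, (S k).card := by
        have := Finset.card_nsmul_le_sum P (fun k => (S k).card) 1 ?_
        · simpa [smul_eq_mul] using this
        · intro k hk
          have hk' := Finset.mem_filter.mp hk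
          have hne : (S k).Nonempty :=
            hEmp k (Finset.mem_range.mp hk'.1)
          show 1 ≤ (S k).card
          exact Finset.Nonempty.card_pos hne
      set e := (Finset.range m \ P).card with he'
      set Pc := P.card with hPc'
      have hePc : e + Pc = m := by
        have hcs : (Finset.range m \ P).card = (Finset.range m).card - P.card :=
          Finset.card_sdiff_of_subset hPsub
        have h3 : P.card ≤ (Finset.range m).card := Finset.card_le_card hPsub
        rw [Finset.card_range] at hcs h3
        omega
      set q := ∑ k ∈ Finset.range m, (S k).card with hq'
      have hq3 : 3 * q ≤ m * m := by omega
      have hemq : e * m + Pc ≤ q := by omega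
      have h3 : m * m = e * m + Pc * m := by rw [← hePc, Nat.add_mul]
      have h4 : 2 * (e * m) ≤ Pc * m := by nlinarith [hemq, hq3, h3]
      have h5 : (2 * e) * m ≤ Pc * m := by rw [mul_assoc]; exact h4
      have h6 : 2 * e ≤ Pc := Nat.le_of_mul_le_mul_right h5 (by omega)
      omega
  · -- no full band
    push_neg at hFull
    set R := (Finset.range m).filter (fun k => (S k).Nonempty) with hR'
    have hgain : ∀ k ∈ Finset.range m,
        (S k).card + (if (S k).Nonempty then 1 else 0) ≤ (T k).card := by
      intro k hk
      have hkm := Finset.mem_range.mp hk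
      by_cases hne : (S k).Nonempty
      · rw [if_pos hne]
        exact gain_one (hSsub k hkm) (hST k hkm) (hR k hkm) (hL k hkm) hne (hFull k hkm)
      · rw [if_neg hne]
        have := hle k hkm
        omega
    have hsum2 : ∑ k ∈ Finset.range m, (S k).card + R.card
        ≤ ∑ k ∈ Finset.range m, (T k).card := by
      have h1 := Finset.sum_le_sum hgain
      rw [Finset.sum_add_distrib] at h1
      rwa [← Finset.card_filter] at h1
    have hRsub : R ⊆ Finset.range m := Finset.filter_subset _ _
    have hSigma : ∑ k ∈ Finset.range m, (S k).card = ∑ k ∈ R, (S k).card := by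
      symm
      apply Finset.sum_subset hRsub
      intro k hk hkR
      have : ¬ (S k).Nonempty := fun hne => hkR (Finset.mem_filter.mpr ⟨hk, hne⟩)
      rw [Finset.not_nonempty_iff_eq_empty] at this
      simp [this]
    have hhigh : ∑ k ∈ R, (S k).card ≤ R.card * (m - 1) := by
      have := Finset.sum_le_card_nsmul R (fun k => (S k).card) (m - 1) ?_
      · simpa [smul_eq_mul] using this
      · intro k hk
        have hk' := Finset.mem_filter.mp hk
        have hkm := Finset.mem_range.mp hk'.1
        show (S k).card ≤ m - 1
        have hss : S k ⊂ Finset.range m :=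
          (hSsub k hkm).ssubset_of_ne (hFull k hkm)
        have := Finset.card_lt_card hss
        rw [Finset.card_range] at this
        omega
    set Rc := R.card with hRc'
    set q := ∑ k ∈ Finset.range m, (S k).card with hq'
    have hq3 : m * m ≤ 3 * q + 2 := by omega
    have hA : m * m ≤ 3 * (Rc * (m - 1)) + 2 := by
      calc m * m ≤ 3 * q + 2 := hq3
      _ ≤ 3 * (Rc * (m-1)) + 2 := by
            have : q ≤ Rc * (m-1) := by omega
            omega
    obtain ⟨M1, rfl⟩ : ∃ M1, m = M1 + 1 := ⟨m - 1, by omega⟩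
    have hM1 : 1 ≤ M1 := by omega
    have hA' : (M1+1) * (M1+1) ≤ 3 * (Rc * M1) + 2 := by simpa using hA
    have hgoal : M1 + 1 ≤ 4 * Rc := by nlinarith [hA', hM1]
    omega

lemma gridAdj_mk {x1 y1 x2 y2 : ℕ}
    (h : (x1 - x2) + (x2 - x1) + ((y1 - y2) + (y2 - y1)) = 1) :
    gridAdj (x1, y1) (x2, y2) := gridAdj_iff.mpr (by simpa using h)

theorem grid_nat_bound (m : ℕ) (hm : 2 ≤ m) (F : Finset (ℕ × ℕ)) (hF : F ⊆ gridGoals m)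
    (hcard : F.card = m * m / 3) : 4 * F.card + m ≤ 4 * (gridN m F).card := by
  have hmain := key m hm (colS F) (colT m F) ?_ ?_ ?_ ?_ ?_ ?_ ?_
  · rw [card_F_eq hF, card_N_eq F]
    exact hmain
  · -- colS ⊆ range m
    intro k hk x hx
    obtain ⟨y, hyF, hyk, hxm, hym, hpar⟩ := exists_of_mem_colS hF hx
    exact Finset.mem_range.mpr hxm
  · -- S ⊆ T (vertical partner within the band)
    intro k hk x hx
    obtain ⟨y, hyF, hyk, hxm, hym, hpar⟩ := exists_of_mem_colS hF hx
    by_cases h2 : y % 2 = 0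
    · exact mem_colT_of hxm (by omega) (by omega)
        ⟨(x, y), hyF, gridAdj_mk (by omega)⟩ (show (y+1)/2 = k by omega)
    · exact mem_colT_of hxm (by omega) (by omega)
        ⟨(x, y), hyF, gridAdj_mk (by omega)⟩ (show (y-1)/2 = k by omega)
  · -- right neighbour
    intro k hk x hx hx1
    obtain ⟨y, hyF, hyk, hxm, hym, hpar⟩ := exists_of_mem_colS hF hx
    exact mem_colT_of hx1 hym (by omega) ⟨(x, y), hyF, gridAdj_mk (by omega)⟩ hyk
  · -- left neighbour
    intro k hk x hx hx0
    obtain ⟨y, hyF, hyk, hxm, hym, hpar⟩ := exists_of_mem_colS hF hx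
    exact mem_colT_of (by omega) hym (by omega) ⟨(x, y), hyF, gridAdj_mk (by omega)⟩ hyk
  · -- up neighbour (x even, so y = 2k+1)
    intro k hk1 x hx hxe
    obtain ⟨y, hyF, hyk, hxm, hym, hpar⟩ := exists_of_mem_colS hF hx
    have hy : y = 2 * k + 1 := by omega
    exact mem_colT_of hxm (by omega) (by omega)
      ⟨(x, y), hyF, gridAdj_mk (by omega)⟩ (show (y+1)/2 = k + 1 by omega)
  · -- down neighbour (x odd, so y = 2k)
    intro k hk hk0 x hx hxo
    obtain ⟨y, hyF, hyk, hxm, hym, hpar⟩ := exists_of_mem_colS hF hx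
    have hy : y = 2 * k := by omega
    exact mem_colT_of hxm (by omega) (by omega)
      ⟨(x, y), hyF, gridAdj_mk (by omega)⟩ (show (y-1)/2 = k - 1 by omega)
  · rw [← card_F_eq hF, hcard]


/-- There is a constant `c > 0` such that for every `m ≥ 2` and every set `F` of goal
vertices of `D(m, 2m)` with `|F| = ⌊m²/3⌋`, the neighborhood of `F` among start vertices
satisfies `|N(F)| ≥ |F| + c · m`. -/
theorem gridN_card_lower_bound :
    ∃ c : ℝ, 0 < c ∧ ∀ m : ℕ, 2 ≤ m → ∀ F : Finset (ℕ × ℕ), F ⊆ gridGoals m →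
      F.card = m * m / 3 → (F.card : ℝ) + c * m ≤ ((gridN m F).card : ℝ) := by
  refine ⟨1/4, by norm_num, ?_⟩
  intro m hm F hF hcard
  have h := grid_nat_bound m hm F hF hcard
  have h' : (4 * F.card + m : ℝ) ≤ (4 * (gridN m F).card : ℝ) := by exact_mod_cast h
  push_cast at h'
  linarith
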